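/- For any valid assignment x, there exists a cyclic shift permutation π of {1,...,k} such that the shifted assignment x' defined by x'_{ij} = x_{i,π(j)} is a valid assignment, attains its peak inventory level at time k, and V_k(x') = V(x') = V(x), where V(x) = max_{ℓ∈{1,...,k}} V_ℓ(x). -/

import Mathlib

/-- For any valid assignment `x` (given by reorder times `τ`),
there is a cyclic shift `π(j) = ((j + t - 1) mod k) + 1` such that the shifted
assignment `x' i j = x i (π j)` is a valid assignment, attains its peak inventory
level at time `k`, and `V_k(x') = V(x') = V(x)` (note `V_ℓ(x') = V_{π(ℓ)}(x)`). -/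
theorem stmt_3 (n k : ℕ) (kc : ℕ → ℕ) (s : ℕ → ℝ) (τ : ℕ → ℕ)
    (x : ℕ → ℕ → ℝ) (V : ℕ → ℝ)
    (hk : 0 < k)
    (hs : ∀ i < n, 0 ≤ s i)
    (hkc : ∀ i < n, 0 < kc i ∧ kc i ∣ k)
    (hτ : ∀ i < n, 1 ≤ τ i ∧ τ i ≤ kc i)
    (hx : ∀ i j, x i j = if ((j : ℤ) - (τ i : ℤ)) % (kc i : ℤ) = 0 then 1 else 0)
    (hV : ∀ ℓ, V ℓ = ∑ i ∈ Finset.range n,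
      s i * ((kc i : ℝ) - ((((ℓ : ℤ) - (τ i : ℤ)) % (kc i : ℤ) : ℤ) : ℝ)) / (kc i : ℝ)) :
    ∃ t < k,
      -- the shifted assignment x' i j = x i ((j + t - 1) % k + 1) is valid:
      (∀ i < n, ∑ j ∈ Finset.Icc 1 (kc i), x i ((j + t - 1) % k + 1) = 1) ∧
      (∀ i < n, ∀ j, kc i < j → j ≤ k →
        x i ((j + t - 1) % k + 1) = x i ((j - kc i + t - 1) % k + 1)) ∧
      -- the shifted schedule attains its peak inventory level at time k:
      (∀ ℓ ∈ Finset.Icc 1 k, V ((ℓ + t - 1) % k + 1) ≤ V ((k + t - 1) % k + 1)) ∧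
      -- and this peak equals the peak inventory level of x:
      (∀ ℓ ∈ Finset.Icc 1 k, V ℓ ≤ V ((k + t - 1) % k + 1)) ∧
      (∃ ℓ ∈ Finset.Icc 1 k, V ℓ = V ((k + t - 1) % k + 1)) := by
  classical
  -- choose a maximizer of V over Icc 1 k
  obtain ⟨m, hm, hmax⟩ := Finset.exists_max_image (Finset.Icc 1 k) V
    ⟨k, Finset.mem_Icc.mpr ⟨hk, le_rfl⟩⟩
  obtain ⟨hm1, hm2⟩ := Finset.mem_Icc.mp hm
  set t := m % k with ht
  have htk : t < k := Nat.mod_lt _ hk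
  have hmk : (k + t - 1) % k + 1 = m := by
    rcases Nat.lt_or_ge m k with h | h
    · have htm : t = m := Nat.mod_eq_of_lt h
      rw [htm]
      have h1 : k + m - 1 = k + (m - 1) := by omega
      rw [h1, Nat.add_mod_left, Nat.mod_eq_of_lt (by omega)]
      omega
    · have hmek : m = k := le_antisymm hm2 h
      have ht0 : t = 0 := by rw [ht, hmek, Nat.mod_self]
      rw [ht0, hmek, Nat.add_zero, Nat.mod_eq_of_lt (by omega)]
      omega
  -- x i depends only on the residue of its argument mod kc i
  have hxcong : ∀ i, ∀ a b : ℕ, ((a : ℤ) % (kc i : ℤ) = (b : ℤ) % (kc i : ℤ)) →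
      x i a = x i b := by
    intro i a b hab
    rw [hx, hx]
    have h2 : ((a : ℤ) - (τ i : ℤ)) % (kc i : ℤ) = ((b : ℤ) - (τ i : ℤ)) % (kc i : ℤ) :=
      Int.ModEq.sub_right _ hab
    rw [h2]
  -- the shifted index is congruent to j + t mod kc i
  have hshift : ∀ i < n, ∀ j : ℕ, 1 ≤ j →
      ((((j + t - 1) % k + 1 : ℕ) : ℤ) % (kc i : ℤ)) = ((j : ℤ) + t) % (kc i : ℤ) := by
    intro i hi j hj
    obtain ⟨hc, hck⟩ := hkc i hi
    have e1 : (((j + t - 1) % k + 1 : ℕ) : ℤ) = ((j : ℤ) + t - 1) % (k : ℤ) + 1 := by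
      have e0 : ((j + t - 1 : ℕ) : ℤ) = (j : ℤ) + t - 1 := by omega
      push_cast [Int.natCast_mod, e0]
      ring
    rw [e1]
    have hdvd : (kc i : ℤ) ∣ (k : ℤ) := Int.natCast_dvd_natCast.mpr hck
    have h2 : (((j : ℤ) + t - 1) % (k : ℤ)) % (kc i : ℤ) = ((j : ℤ) + t - 1) % (kc i : ℤ) :=
      Int.emod_emod_of_dvd _ hdvd
    have h3 : (((j : ℤ) + t - 1) % (k : ℤ) + 1) % (kc i : ℤ)
        = (((j : ℤ) + t - 1) + 1) % (kc i : ℤ) := Int.ModEq.add_right 1 h2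
    rw [h3]
    ring_nf
  refine ⟨t, htk, ?_, ?_, ?_, ?_, ?_⟩
  · -- validity: sum over one cycle is 1
    intro i hi
    obtain ⟨hc, hck⟩ := hkc i hi
    obtain ⟨hτ1, hτ2⟩ := hτ i hi
    have hcz : ((kc i : ℤ)) ≠ 0 := by exact_mod_cast hc.ne'
    set r : ℤ := ((τ i : ℤ) - t - 1) % (kc i : ℤ) with hrdef
    have hr0 : 0 ≤ r := Int.emod_nonneg _ hcz
    have hrc : r < (kc i : ℤ) := Int.emod_lt_of_pos _ (by exact_mod_cast hc)
    have hq2 : r + (kc i : ℤ) * (((τ i : ℤ) - t - 1) / (kc i : ℤ)) = (τ i : ℤ) - t - 1 :=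
      Int.emod_add_mul_ediv _ _
    set j0 : ℕ := r.toNat + 1 with hj0
    have hj0mem : j0 ∈ Finset.Icc 1 (kc i) := by
      rw [Finset.mem_Icc]
      omega
    have hterm : ∀ j ∈ Finset.Icc 1 (kc i),
        x i ((j + t - 1) % k + 1) = if j = j0 then 1 else 0 := by
      intro j hjmem
      obtain ⟨hj1, hj2⟩ := Finset.mem_Icc.mp hjmem
      rw [hx]
      have hcong : ((((j + t - 1) % k + 1 : ℕ) : ℤ) - (τ i : ℤ)) % (kc i : ℤ)
          = ((j : ℤ) + t - (τ i : ℤ)) % (kc i : ℤ) := by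
        have := Int.ModEq.sub_right (τ i : ℤ) (hshift i hi j hj1)
        exact this
      rw [hcong]
      congr 1
      rw [eq_iff_iff]
      constructor
      · intro hzero
        have hdvd0 : (kc i : ℤ) ∣ ((j : ℤ) - 1 - r) := by
          obtain ⟨q, hq⟩ := Int.dvd_of_emod_eq_zero hzero
          refine ⟨q + (((τ i : ℤ) - t - 1) / (kc i : ℤ)), ?_⟩
          rw [mul_add]
          linarith [hq2]
        have h0 : (j : ℤ) - 1 - r = 0 :=
          Int.eq_zero_of_abs_lt_dvd hdvd0 (by rw [abs_lt]; constructor <;> omega)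
        omega
      · intro hje
        subst hje
        apply Int.emod_eq_zero_of_dvd
        refine ⟨-(((τ i : ℤ) - t - 1) / (kc i : ℤ)), ?_⟩
        have hcast : ((j0 : ℕ) : ℤ) = r + 1 := by omega
        rw [hcast, mul_neg]
        linarith [hq2]
    rw [Finset.sum_congr rfl hterm, Finset.sum_ite_eq' (Finset.Icc 1 (kc i)) j0 (fun _ => (1 : ℝ)),
      if_pos hj0mem]
  · -- periodicity
    intro i hi j hcj hjk
    obtain ⟨hc, hck⟩ := hkc i hi
    apply hxcong
    rw [hshift i hi j (by omega), hshift i hi (j - kc i) (by omega)]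
    have e0 : ((j - kc i : ℕ) : ℤ) = (j : ℤ) - (kc i : ℤ) := by omega
    rw [e0]
    have : (j : ℤ) - (kc i : ℤ) + t = (j : ℤ) + t + (kc i : ℤ) * (-1) := by ring
    rw [this, Int.add_mul_emod_self_left]
  · -- peak at time k
    intro ℓ hℓ
    obtain ⟨hℓ1, hℓ2⟩ := Finset.mem_Icc.mp hℓ
    rw [hmk]
    apply hmax
    rw [Finset.mem_Icc]
    exact ⟨Nat.le_add_left _ _, Nat.succ_le_of_lt (Nat.mod_lt _ hk)⟩
  · -- peak equals global max
    intro ℓ hℓ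
    rw [hmk]
    exact hmax ℓ hℓ
  · exact ⟨m, hm, by rw [hmk]⟩
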